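/- Let 𝔛 and 𝔜 be finite-dimensional Hilbert spaces, A ∈ B(𝔜) and B ∈ B(𝔛) self-adjoint with disjoint spectra, and V ∈ B(𝔛,𝔜). Then the Sylvester equation AW − WB = V has a unique solution W ∈ B(𝔛,𝔜), and it satisfies ‖W‖ ≤ (min{dim 𝔛, dim 𝔜})^{1/2} · ‖V‖ / dist(Spec(A), Spec(B)). -/

import Mathlib

open scoped InnerProductSpace

private lemma stmt6_mem_spectrum_of_eig {E : Type*} [NormedAddCommGroup E] [NormedSpace ℂ E]
    (T : E →L[ℂ] E) {μ : ℂ} {v : E} (hv : v ≠ 0) (h : T v = μ • v) :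
    μ ∈ spectrum ℂ T := by
  rw [spectrum.mem_iff]
  intro hu
  obtain ⟨u, hu⟩ := hu
  apply hv
  have h0 : (algebraMap ℂ (E →L[ℂ] E) μ - T) v = 0 := by
    rw [Algebra.algebraMap_eq_smul_one]
    simp [ContinuousLinearMap.sub_apply, h]
  calc v = ((↑u⁻¹ : E →L[ℂ] E) * ↑u) v := by rw [u.inv_mul]; rfl
    _ = (↑u⁻¹ : E →L[ℂ] E) ((algebraMap ℂ (E →L[ℂ] E) μ - T) v) := by
        rw [ContinuousLinearMap.mul_apply, hu]
    _ = 0 := by rw [h0, map_zero]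

private lemma stmt6_parseval {E : Type*} [NormedAddCommGroup E] [InnerProductSpace ℂ E]
    {n : ℕ} (b : OrthonormalBasis (Fin n) ℂ E) (y : E) :
    ∑ i, ‖⟪b i, y⟫_ℂ‖ ^ 2 = ‖y‖ ^ 2 := by
  have h := b.sum_inner_mul_inner y y
  have h1 : ∀ i, ⟪y, b i⟫_ℂ * ⟪b i, y⟫_ℂ = ((‖⟪b i, y⟫_ℂ‖ : ℂ)) ^ 2 := fun i => by
    rw [← inner_conj_symm, RCLike.conj_mul]
    norm_cast
  rw [Finset.sum_congr rfl fun i _ => h1 i] at h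
  have h2 : ∑ i, RCLike.re (((‖⟪b i, y⟫_ℂ‖ : ℂ)) ^ 2) = ‖y‖ ^ 2 := by
    rw [← map_sum, h, inner_self_eq_norm_sq]
  simpa [← Complex.ofReal_pow] using h2

private lemma stmt6_clm_eq_zero {X Y : Type*} [NormedAddCommGroup X] [InnerProductSpace ℂ X]
    [NormedAddCommGroup Y] [InnerProductSpace ℂ Y] {m n : ℕ}
    (e : OrthonormalBasis (Fin m) ℂ X) (f : OrthonormalBasis (Fin n) ℂ Y)
    (T : X →L[ℂ] Y) (h : ∀ i j, ⟪f i, T (e j)⟫_ℂ = 0) : T = 0 := by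
  have hj : ∀ j, T (e j) = 0 := fun j => by
    rw [← f.sum_repr' (T (e j))]
    simp [h]
  apply ContinuousLinearMap.coe_injective
  apply e.toBasis.ext
  intro j
  simp [hj j]

/-- for self-adjoint A, B on finite-dimensional Hilbert spaces with
disjoint spectra, the Sylvester equation AW − WB = V has a unique solution and
‖W‖ ≤ (min{dim 𝔛, dim 𝔜})^{1/2} ‖V‖ / dist(Spec A, Spec B). -/
theorem stmt_6 {X Y : Type*}
    [NormedAddCommGroup X] [InnerProductSpace ℂ X] [FiniteDimensional ℂ X]
    [NormedAddCommGroup Y] [InnerProductSpace ℂ Y] [FiniteDimensional ℂ Y]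
    (A : Y →L[ℂ] Y) (B : X →L[ℂ] X) (hA : IsSelfAdjoint A) (hB : IsSelfAdjoint B)
    (hdisj : spectrum ℂ A ∩ spectrum ℂ B = ∅) (V : X →L[ℂ] Y) :
    (∃! W : X →L[ℂ] Y, A ∘L W - W ∘L B = V) ∧
    ∀ W : X →L[ℂ] Y, A ∘L W - W ∘L B = V →
      ‖W‖ ≤ Real.sqrt (min (Module.finrank ℂ X) (Module.finrank ℂ Y) : ℕ) * ‖V‖ /
        sInf {r : ℝ | ∃ a ∈ spectrum ℂ A, ∃ b ∈ spectrum ℂ B, r = dist a b} := by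
  classical
  set S : Set ℝ := {r : ℝ | ∃ a ∈ spectrum ℂ A, ∃ b ∈ spectrum ℂ B, r = dist a b} with hSdef
  -- degenerate cases
  rcases subsingleton_or_nontrivial X with hX | hX
  · have hz : ∀ W : X →L[ℂ] Y, W = 0 := fun W => by
      ext x; rw [Subsingleton.elim x 0]; simp
    constructor
    · exact ⟨0, by rw [hz V]; simp, fun y _ => by rw [hz y]⟩
    · intro W _
      have h0 : Module.finrank ℂ X = 0 := Module.finrank_zero_of_subsingleton
      rw [hz W, h0]
      simp
  rcases subsingleton_or_nontrivial Y with hY | hY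
  · have hz : ∀ W : X →L[ℂ] Y, W = 0 := fun W => by
      ext x; exact Subsingleton.elim _ _
    constructor
    · exact ⟨0, by rw [hz V]; simp, fun y _ => by rw [hz y]⟩
    · intro W _
      have h0 : Module.finrank ℂ Y = 0 := Module.finrank_zero_of_subsingleton
      rw [hz W, h0]
      simp
  -- main case
  have hA' := hA.isSymmetric
  have hB' := hB.isSymmetric
  set nY := Module.finrank ℂ Y with hnY
  set nX := Module.finrank ℂ X with hnX
  let f := hA'.eigenvectorBasis (n := nY) rfl
  let α := hA'.eigenvalues (n := nY) rfl
  let e := hB'.eigenvectorBasis (n := nX) rfl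
  let β := hB'.eigenvalues (n := nX) rfl
  have hfA : ∀ i, A (f i) = (α i : ℂ) • f i := fun i =>
    hA'.apply_eigenvectorBasis rfl i
  have heB : ∀ j, B (e j) = (β j : ℂ) • e j := fun j =>
    hB'.apply_eigenvectorBasis rfl j
  have hfmem : ∀ i, ((α i : ℝ) : ℂ) ∈ spectrum ℂ A := fun i =>
    stmt6_mem_spectrum_of_eig A (f.orthonormal.ne_zero i) (hfA i)
  have hemem : ∀ j, ((β j : ℝ) : ℂ) ∈ spectrum ℂ B := fun j =>
    stmt6_mem_spectrum_of_eig B (e.orthonormal.ne_zero j) (heB j)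
  have hSbdd : BddBelow S := ⟨0, fun r hr => by
    obtain ⟨a, _, b, _, rfl⟩ := hr; exact dist_nonneg⟩
  have hdle : ∀ i j, sInf S ≤ |α i - β j| := by
    intro i j
    refine csInf_le hSbdd ⟨_, hfmem i, _, hemem j, ?_⟩
    rw [Complex.dist_eq, ← Complex.ofReal_sub, Complex.norm_real, Real.norm_eq_abs]
  have hSeq : S = (fun p : ℂ × ℂ => dist p.1 p.2) '' (spectrum ℂ A ×ˢ spectrum ℂ B) := by
    ext r
    constructor
    · rintro ⟨a, ha, b, hb, rfl⟩; exact ⟨(a, b), ⟨ha, hb⟩, rfl⟩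
    · rintro ⟨⟨a, b⟩, ⟨ha, hb⟩, rfl⟩; exact ⟨a, ha, b, hb, rfl⟩
  have hScpt : IsCompact S := by
    rw [hSeq]
    exact ((spectrum.isCompact A).prod (spectrum.isCompact B)).image continuous_dist
  have h0Y : 0 < nY := Module.finrank_pos
  have h0X : 0 < nX := Module.finrank_pos
  have hSne : S.Nonempty :=
    ⟨_, ⟨_, hfmem ⟨0, h0Y⟩, _, hemem ⟨0, h0X⟩, rfl⟩⟩
  have hδpos : 0 < sInf S := by
    have hin := hScpt.sInf_mem hSne
    rw [hSeq] at hin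
    obtain ⟨⟨a, b⟩, ⟨ha, hb⟩, hab⟩ := hin
    rw [← hSeq] at hab
    have hab' : dist a b = sInf S := hab
    rw [← hab']
    refine dist_pos.mpr fun h => ?_
    have hmem : a ∈ spectrum ℂ A ∩ spectrum ℂ B := ⟨ha, h ▸ hb⟩
    rw [hdisj] at hmem
    exact hmem
  -- key entrywise identity
  have hkey : ∀ (W : X →L[ℂ] Y) (i : Fin nY) (j : Fin nX),
      ⟪f i, (A ∘L W - W ∘L B) (e j)⟫_ℂ = ((α i : ℂ) - (β j : ℂ)) * ⟪f i, W (e j)⟫_ℂ := by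
    intro W i j
    have h1 : ⟪f i, A (W (e j))⟫_ℂ = (α i : ℂ) * ⟪f i, W (e j)⟫_ℂ := by
      have hs := hA' (f i) (W (e j))
      simp only [ContinuousLinearMap.coe_coe] at hs
      rw [← hs, hfA i, inner_smul_left, Complex.conj_ofReal]
    have h2 : ⟪f i, W (B (e j))⟫_ℂ = (β j : ℂ) * ⟪f i, W (e j)⟫_ℂ := by
      rw [heB j, map_smul, inner_smul_right]
    simp only [ContinuousLinearMap.sub_apply, ContinuousLinearMap.comp_apply,
      inner_sub_right, h1, h2]
    ring
  have hne : ∀ (i : Fin nY) (j : Fin nX), ((α i : ℂ) - (β j : ℂ)) ≠ 0 := by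
    intro i j
    rw [← Complex.ofReal_sub, Ne, Complex.ofReal_eq_zero]
    intro h
    have hd := hdle i j
    rw [h, abs_zero] at hd
    linarith
  -- the Sylvester operator
  let L : (X →L[ℂ] Y) →ₗ[ℂ] (X →L[ℂ] Y) :=
    { toFun := fun W => A ∘L W - W ∘L B
      map_add' := fun W₁ W₂ => by
        ext x
        simp only [ContinuousLinearMap.sub_apply, ContinuousLinearMap.comp_apply,
          ContinuousLinearMap.add_apply, map_add]
        abel
      map_smul' := fun c W => by
        ext x
        simp only [ContinuousLinearMap.sub_apply, ContinuousLinearMap.comp_apply,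
          ContinuousLinearMap.smul_apply, map_smul, RingHom.id_apply, smul_sub] }
  have hLker : ∀ W, L W = 0 → W = 0 := by
    intro W hW
    apply stmt6_clm_eq_zero e f
    intro i j
    have hW' : A ∘L W - W ∘L B = 0 := hW
    have h0 : ((α i : ℂ) - (β j : ℂ)) * ⟪f i, W (e j)⟫_ℂ = 0 := by
      rw [← hkey W i j, hW']
      simp
    exact (mul_eq_zero.mp h0).resolve_left (hne i j)
  have hLinj : Function.Injective L := by
    intro W₁ W₂ h12
    have h := hLker (W₁ - W₂) (by rw [map_sub, h12, sub_self])
    exact sub_eq_zero.mp h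
  have hLsurj : Function.Surjective L := LinearMap.injective_iff_surjective.mp hLinj
  obtain ⟨W₀, hW₀⟩ := hLsurj V
  constructor
  · refine ⟨W₀, hW₀, fun y hy => hLinj ?_⟩
    show L y = L W₀
    have hy' : L y = V := hy
    rw [hy', hW₀]
  -- the norm bound
  intro W hW
  set w : Fin nY → Fin nX → ℂ := fun i j => ⟪f i, W (e j)⟫_ℂ with hwdef
  set v : Fin nY → Fin nX → ℂ := fun i j => ⟪f i, V (e j)⟫_ℂ with hvdef
  have hent : ∀ i j, ((α i : ℂ) - (β j : ℂ)) * w i j = v i j := by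
    intro i j
    show ((α i : ℂ) - (β j : ℂ)) * ⟪f i, W (e j)⟫_ℂ = ⟪f i, V (e j)⟫_ℂ
    rw [← hW, hkey W i j]
  have hw2 : ∀ i j, ‖w i j‖ ^ 2 ≤ ‖v i j‖ ^ 2 / (sInf S) ^ 2 := by
    intro i j
    have h1 : |α i - β j| * ‖w i j‖ = ‖v i j‖ := by
      rw [← hent i j, norm_mul]
      congr 1
      rw [← Complex.ofReal_sub, Complex.norm_real, Real.norm_eq_abs]
    have h2 : sInf S * ‖w i j‖ ≤ ‖v i j‖ := by
      rw [← h1]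
      exact mul_le_mul_of_nonneg_right (hdle i j) (norm_nonneg _)
    rw [le_div_iff₀ (by positivity)]
    calc ‖w i j‖ ^ 2 * sInf S ^ 2 = (sInf S * ‖w i j‖) ^ 2 := by ring
      _ ≤ ‖v i j‖ ^ 2 := pow_le_pow_left₀ (by positivity) h2 2
  set Sw := ∑ i, ∑ j, ‖w i j‖ ^ 2 with hSwdef
  set Sv := ∑ i, ∑ j, ‖v i j‖ ^ 2 with hSvdef
  have hSwSv : Sw ≤ Sv / (sInf S) ^ 2 := by
    rw [hSwdef, hSvdef, Finset.sum_div]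
    refine Finset.sum_le_sum fun i _ => ?_
    rw [Finset.sum_div]
    exact Finset.sum_le_sum fun j _ => hw2 i j
  have hSv1 : Sv ≤ (nX : ℝ) * ‖V‖ ^ 2 := by
    rw [hSvdef, Finset.sum_comm]
    calc ∑ j, ∑ i, ‖v i j‖ ^ 2 = ∑ j : Fin nX, ‖V (e j)‖ ^ 2 :=
          Finset.sum_congr rfl fun j _ => stmt6_parseval f (V (e j))
      _ ≤ ∑ _j : Fin nX, ‖V‖ ^ 2 := Finset.sum_le_sum fun j _ => by
          have hb := V.le_opNorm (e j)
          have h1 : ‖(e j : X)‖ = 1 := e.orthonormal.1 j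
          rw [h1, mul_one] at hb
          exact pow_le_pow_left₀ (norm_nonneg _) hb 2
      _ = (nX : ℝ) * ‖V‖ ^ 2 := by
          simp [Finset.sum_const, nsmul_eq_mul]
  have hSv2 : Sv ≤ (nY : ℝ) * ‖V‖ ^ 2 := by
    rw [hSvdef]
    calc ∑ i, ∑ j, ‖v i j‖ ^ 2
        = ∑ i : Fin nY, ‖(ContinuousLinearMap.adjoint V) (f i)‖ ^ 2 := by
          refine Finset.sum_congr rfl fun i _ => ?_
          rw [← stmt6_parseval e ((ContinuousLinearMap.adjoint V) (f i))]
          refine Finset.sum_congr rfl fun j _ => ?_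
          have h1 := ContinuousLinearMap.adjoint_inner_left V (e j) (f i)
          have h2 : ‖⟪e j, (ContinuousLinearMap.adjoint V) (f i)⟫_ℂ‖
              = ‖⟪(ContinuousLinearMap.adjoint V) (f i), e j⟫_ℂ‖ := norm_inner_symm _ _
          rw [h2, h1]
      _ ≤ ∑ _i : Fin nY, ‖V‖ ^ 2 := Finset.sum_le_sum fun i _ => by
          have hb := (ContinuousLinearMap.adjoint V).le_opNorm (f i)
          have h1 : ‖(f i : Y)‖ = 1 := f.orthonormal.1 i
          have h2 : ‖ContinuousLinearMap.adjoint V‖ = ‖V‖ :=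
            ContinuousLinearMap.adjoint.norm_map V
          rw [h1, mul_one, h2] at hb
          exact pow_le_pow_left₀ (norm_nonneg _) hb 2
      _ = (nY : ℝ) * ‖V‖ ^ 2 := by
          simp [Finset.sum_const, nsmul_eq_mul]
  have hSvmin : Sv ≤ ((min nX nY : ℕ) : ℝ) * ‖V‖ ^ 2 := by
    rcases le_total nX nY with h | h
    · rw [min_eq_left h]; exact hSv1
    · rw [min_eq_right h]; exact hSv2
  have hSwnn : 0 ≤ Sw := Finset.sum_nonneg fun i _ => Finset.sum_nonneg fun j _ => by positivity
  have hWle : ‖W‖ ≤ Real.sqrt Sw := by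
    refine ContinuousLinearMap.opNorm_le_bound _ (Real.sqrt_nonneg _) fun x => ?_
    have hWx : ∀ i, ⟪f i, W x⟫_ℂ = ∑ j, ⟪e j, x⟫_ℂ * w i j := by
      intro i
      conv_lhs => rw [← e.sum_repr' x]
      rw [map_sum, inner_sum]
      exact Finset.sum_congr rfl fun j _ => by rw [map_smul, inner_smul_right]
    have hx2 : ‖W x‖ ^ 2 ≤ Sw * ‖x‖ ^ 2 := by
      rw [← stmt6_parseval f (W x)]
      have hterm : ∀ i, ‖⟪f i, W x⟫_ℂ‖ ^ 2 ≤ (∑ j, ‖w i j‖ ^ 2) * ‖x‖ ^ 2 := by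
        intro i
        rw [hWx i]
        calc ‖∑ j, ⟪e j, x⟫_ℂ * w i j‖ ^ 2
            ≤ (∑ j, ‖w i j‖ * ‖⟪e j, x⟫_ℂ‖) ^ 2 := by
              refine pow_le_pow_left₀ (norm_nonneg _) ?_ 2
              refine (norm_sum_le _ _).trans (le_of_eq ?_)
              exact Finset.sum_congr rfl fun j _ => by rw [norm_mul, mul_comm]
          _ ≤ (∑ j, ‖w i j‖ ^ 2) * (∑ j, ‖⟪e j, x⟫_ℂ‖ ^ 2) :=
              Finset.sum_mul_sq_le_sq_mul_sq Finset.univ _ _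
          _ = (∑ j, ‖w i j‖ ^ 2) * ‖x‖ ^ 2 := by rw [stmt6_parseval e x]
      calc ∑ i, ‖⟪f i, W x⟫_ℂ‖ ^ 2 ≤ ∑ i, (∑ j, ‖w i j‖ ^ 2) * ‖x‖ ^ 2 :=
            Finset.sum_le_sum fun i _ => hterm i
        _ = Sw * ‖x‖ ^ 2 := by rw [hSwdef, Finset.sum_mul]
    calc ‖W x‖ = Real.sqrt (‖W x‖ ^ 2) := (Real.sqrt_sq (norm_nonneg _)).symm
      _ ≤ Real.sqrt (Sw * ‖x‖ ^ 2) := Real.sqrt_le_sqrt hx2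
      _ = Real.sqrt Sw * ‖x‖ := by rw [Real.sqrt_mul hSwnn, Real.sqrt_sq (norm_nonneg _)]
  have hfinal : ‖W‖ ≤ Real.sqrt (((min nX nY : ℕ) : ℝ) * ‖V‖ ^ 2 / (sInf S) ^ 2) := by
    refine hWle.trans (Real.sqrt_le_sqrt ?_)
    refine hSwSv.trans ?_
    gcongr
  have hsq : ((min nX nY : ℕ) : ℝ) * ‖V‖ ^ 2 / (sInf S) ^ 2
      = (Real.sqrt ((min nX nY : ℕ) : ℝ) * ‖V‖ / sInf S) ^ 2 := by
    rw [div_pow, mul_pow, Real.sq_sqrt (by positivity)]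
  rw [hsq, Real.sqrt_sq (by positivity)] at hfinal
  exact hfinal
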